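/- Let A ∈ ℝⁿˣⁿ be positive semidefinite, X ∈ ℝⁿˣᵈ a matrix with rows x₁,…,xₙ, and η ∈ ℝᵈ positive. Then the integral over ℝᵈ of the PSD model f(x) = Σᵢⱼ Aᵢⱼ k_η(xᵢ,x) k_η(xⱼ,x) equals c_{2η} · Tr(A K), where c_{2η} = π^{d/2} ∏ₜ (2ηₜ)^{-1/2} and K is the n×n matrix with Kᵢⱼ = k_{η/2}(xᵢ,xⱼ). -/

import Mathlib

open MeasureTheory

/-- The anisotropic Gaussian kernel with precision vector `η`. -/
noncomputable def gaussK {d : ℕ} (η x y : Fin d → ℝ) : ℝ :=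
  Real.exp (-∑ t, η t * (x t - y t) ^ 2)

lemma gauss1 {c m : ℝ} (hc : 0 < c) :
    ∫ y : ℝ, Real.exp (-(c * (y - m) ^ 2)) = Real.sqrt (Real.pi / c) := by
  rw [integral_sub_right_eq_self (fun y => Real.exp (-(c * y ^ 2))) m]
  simpa [neg_mul] using integral_gaussian c

lemma gauss1_int {c m : ℝ} (hc : 0 < c) :
    Integrable (fun y : ℝ => Real.exp (-(c * (y - m) ^ 2))) := by
  have := (integrable_exp_neg_mul_sq hc).comp_sub_right m
  simpa [neg_mul] using this

lemma key_split {d : ℕ} (η a b : Fin d → ℝ) (x : Fin d → ℝ) :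
    gaussK η a x * gaussK η b x =
      gaussK (fun t => η t / 2) a b *
        ∏ t, Real.exp (-((2 * η t) * (x t - (a t + b t) / 2) ^ 2)) := by
  have hE : (-∑ t, η t * (a t - x t) ^ 2) + (-∑ t, η t * (b t - x t) ^ 2) =
      (-∑ t, (η t / 2) * (a t - b t) ^ 2) +
        ∑ t, -((2 * η t) * (x t - (a t + b t) / 2) ^ 2) := by
    simp only [← Finset.sum_neg_distrib, ← Finset.sum_add_distrib]
    exact Finset.sum_congr rfl fun t _ => by ring
  rw [gaussK, gaussK, gaussK, ← Real.exp_add, hE, Real.exp_add, Real.exp_sum]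

theorem psd_model_integral (d n : ℕ) (A : Matrix (Fin n) (Fin n) ℝ) (hA : A.PosSemidef)
    (X : Fin n → Fin d → ℝ) (η : Fin d → ℝ) (hη : ∀ t, 0 < η t) :
    ∫ x : Fin d → ℝ, ∑ i, ∑ j, A i j * gaussK η (X i) x * gaussK η (X j) x =
      (Real.pi ^ ((d : ℝ) / 2) * ∏ t, (2 * η t) ^ (-(1 : ℝ) / 2)) *
        Matrix.trace (A * Matrix.of fun i j => gaussK (fun t => η t / 2) (X i) (X j)) := by
  have h2η : ∀ t, (0:ℝ) < 2 * η t := fun t => by linarith [hη t]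
  -- constant value
  set C : ℝ := Real.pi ^ ((d : ℝ) / 2) * ∏ t, (2 * η t) ^ (-(1 : ℝ) / 2) with hC
  have hCprod : (∏ t, Real.sqrt (Real.pi / (2 * η t))) = C := by
    rw [hC]
    have h1 : ∀ t ∈ Finset.univ, Real.sqrt (Real.pi / (2 * η t)) =
        Real.sqrt Real.pi * (2 * η t) ^ (-(1:ℝ) / 2) := by
      intro t _
      rw [Real.sqrt_div Real.pi_pos.le, Real.sqrt_eq_rpow (2 * η t), div_eq_mul_inv,
        ← Real.rpow_neg (h2η t).le]
      norm_num
    rw [Finset.prod_congr rfl h1, Finset.prod_mul_distrib, Finset.prod_const]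
    congr 1
    rw [Finset.card_univ, Fintype.card_fin, Real.sqrt_eq_rpow,
      ← Real.rpow_natCast (Real.pi ^ ((1:ℝ)/2)) d, ← Real.rpow_mul Real.pi_pos.le]
    congr 1
    ring
  have hterm : ∀ i j : Fin n,
      ∫ x : Fin d → ℝ, A i j * gaussK η (X i) x * gaussK η (X j) x =
        A i j * gaussK (fun t => η t / 2) (X i) (X j) * C := by
    intro i j
    have : ∀ x : Fin d → ℝ, A i j * gaussK η (X i) x * gaussK η (X j) x =
        (A i j * gaussK (fun t => η t / 2) (X i) (X j)) *
          ∏ t, Real.exp (-((2 * η t) * (x t - (X i t + X j t) / 2) ^ 2)) := by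
      intro x
      rw [mul_assoc, key_split]
      ring
    simp_rw [this]
    rw [integral_const_mul, volume_pi, integral_fintype_prod_eq_prod (ι := Fin d)
      (fun t y => Real.exp (-((2 * η t) * (y - (X i t + X j t) / 2) ^ 2)))]
    rw [Finset.prod_congr rfl fun t _ => gauss1 (h2η t), hCprod]
  have hint : ∀ i j : Fin n,
      Integrable (fun x : Fin d → ℝ => A i j * gaussK η (X i) x * gaussK η (X j) x) := by
    intro i j
    have : ∀ x : Fin d → ℝ, A i j * gaussK η (X i) x * gaussK η (X j) x =
        (A i j * gaussK (fun t => η t / 2) (X i) (X j)) *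
          ∏ t, Real.exp (-((2 * η t) * (x t - (X i t + X j t) / 2) ^ 2)) := by
      intro x
      rw [mul_assoc, key_split]
      ring
    simp_rw [this]
    exact (Integrable.fintype_prod fun t => gauss1_int (h2η t)).const_mul _
  calc
    ∫ x : Fin d → ℝ, ∑ i, ∑ j, A i j * gaussK η (X i) x * gaussK η (X j) x
        = ∑ i, ∑ j, ∫ x : Fin d → ℝ, A i j * gaussK η (X i) x * gaussK η (X j) x := by
          rw [integral_finset_sum _ fun i _ => integrable_finset_sum _ fun j _ => hint i j]
          exact Finset.sum_congr rfl fun i _ =>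
            integral_finset_sum _ fun j _ => hint i j
    _ = ∑ i, ∑ j, A i j * gaussK (fun t => η t / 2) (X i) (X j) * C := by
          simp_rw [hterm]
    _ = C * Matrix.trace (A * Matrix.of fun i j => gaussK (fun t => η t / 2) (X i) (X j)) := by
          rw [Matrix.trace, Finset.mul_sum]
          apply Finset.sum_congr rfl
          intro i _
          rw [Matrix.diag_apply, Matrix.mul_apply, Finset.mul_sum]
          apply Finset.sum_congr rfl
          intro j _
          have hsymm : gaussK (fun t => η t / 2) (X j) (X i) =
              gaussK (fun t => η t / 2) (X i) (X j) := by
            unfold gaussK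
            congr 1
            congr 1
            exact Finset.sum_congr rfl fun t _ => by ring
          simp [Matrix.of_apply, hsymm]
          ring
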